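/- The class of DHRSD PGFs equals the intersection of the classes of discrete SD and discrete HID PGFs; moreover for P ∈ DHRSD the component in the defining equation can be taken to be P_{c,p}(s) = P_c(s)·P_p(1-c+cs) where P_c(s) = P(s)/P(1-c+cs) and P_p(s) = P(s)/(p + (1-p)P(s)^k)^{1/k}. -/

import Mathlib

open Set

/-- `P` is (on `[0,1]`) the probability generating function of a `ℤ₊`-valued
random variable. -/
def IsPGF (P : ℝ → ℝ) : Prop :=
  ∃ q : PMF ℕ, ∀ s ∈ Set.Icc (0:ℝ) 1, P s = ∑' n : ℕ, (q n).toReal * s ^ n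

/-- `P` is discrete HRSD with parameter `k`. -/
def IsDHRSD (k : ℕ) (P : ℝ → ℝ) : Prop :=
  ∀ c ∈ Set.Ioc (0:ℝ) 1, ∀ p ∈ Set.Ico (0:ℝ) 1,
    ∃ Q : ℝ → ℝ, IsPGF Q ∧
      ∀ s ∈ Set.Icc (0:ℝ) 1,
        P s = Q s * (p + (1 - p) * (P (1 - c + c * s)) ^ k) ^ ((k : ℝ)⁻¹)

/-- `P` is discrete self-decomposable (Steutel–van Harn). -/
def IsDSD (P : ℝ → ℝ) : Prop :=
  ∀ c ∈ Set.Ioo (0:ℝ) 1, IsPGF (fun s => P s / P (1 - c + c * s))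

/-- `P` is discrete Harris infinitely divisible with parameter `k`. -/
def IsDHID (k : ℕ) (P : ℝ → ℝ) : Prop :=
  ∀ p ∈ Set.Ioo (0:ℝ) 1,
    ∃ Pp : ℝ → ℝ, IsPGF Pp ∧
      ∀ s ∈ Set.Icc (0:ℝ) 1,
        P s = Pp s / ((1 / p) - ((1 / p) - 1) * (Pp s) ^ k) ^ ((k : ℝ)⁻¹)

open scoped ENNReal

lemma isPGF_congr {f g : ℝ → ℝ} (hf : IsPGF f)
    (h : ∀ s ∈ Set.Icc (0:ℝ) 1, g s = f s) : IsPGF g := by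
  obtain ⟨q, hq⟩ := hf
  exact ⟨q, fun s hs => (h s hs).trans (hq s hs)⟩

lemma isPGF_one : IsPGF (fun _ => 1) := by
  refine ⟨PMF.pure 0, fun s hs => ?_⟩
  rw [tsum_eq_single 0]
  · simp [PMF.pure_apply]
  · intro n hn; simp [PMF.pure_apply, if_neg hn]

lemma pmf_summable_toReal (q : PMF ℕ) : Summable (fun n => (q n).toReal) := by
  have := ENNReal.summable_toReal q.tsum_coe_ne_top
  exact this

lemma pmf_tsum_toReal (q : PMF ℕ) : ∑' n, (q n).toReal = 1 := by
  rw [← ENNReal.tsum_toReal_eq (fun n => q.apply_ne_top n), q.tsum_coe, ENNReal.toReal_one]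

lemma pgf_summable (q : PMF ℕ) {s : ℝ} (hs : s ∈ Set.Icc (0:ℝ) 1) :
    Summable (fun n => (q n).toReal * s ^ n) := by
  refine (pmf_summable_toReal q).of_nonneg_of_le (fun n => mul_nonneg ENNReal.toReal_nonneg (pow_nonneg hs.1 n)) (fun n => ?_)
  have h1 : s ^ n ≤ 1 := pow_le_one₀ hs.1 hs.2
  nlinarith [ENNReal.toReal_nonneg (a := q n)]

lemma IsPGF.mem_Icc {f : ℝ → ℝ} (hf : IsPGF f) {s : ℝ} (hs : s ∈ Set.Icc (0:ℝ) 1) :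
    f s ∈ Set.Icc (0:ℝ) 1 := by
  obtain ⟨q, hq⟩ := hf
  rw [hq s hs]
  constructor
  · exact tsum_nonneg (fun n => mul_nonneg ENNReal.toReal_nonneg (pow_nonneg hs.1 n))
  · calc ∑' n, (q n).toReal * s ^ n ≤ ∑' n, (q n).toReal := by
          refine Summable.tsum_le_tsum (fun n => ?_) (pgf_summable q hs) (pmf_summable_toReal q)
          have h1 : s ^ n ≤ 1 := pow_le_one₀ hs.1 hs.2
          nlinarith [ENNReal.toReal_nonneg (a := q n)]
        _ = 1 := pmf_tsum_toReal q

lemma isPGF_mul {f g : ℝ → ℝ} (hf : IsPGF f) (hg : IsPGF g) :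
    IsPGF (fun s => f s * g s) := by
  obtain ⟨q, hq⟩ := hf
  obtain ⟨r, hr⟩ := hg
  set W : ℕ → ℝ := fun j => ∑ x ∈ Finset.HasAntidiagonal.antidiagonal j, (q x.1).toReal * (r x.2).toReal
    with hW
  have hWnn : ∀ j, 0 ≤ W j := fun j =>
    Finset.sum_nonneg fun x _ => mul_nonneg ENNReal.toReal_nonneg ENNReal.toReal_nonneg
  have hnorm : ∀ s ∈ Set.Icc (0:ℝ) 1, ∀ (u : PMF ℕ),
      Summable fun n => ‖(u n).toReal * s ^ n‖ := by
    intro s hs u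
    refine (pgf_summable u hs).congr fun n => ?_
    rw [Real.norm_eq_abs, abs_of_nonneg (mul_nonneg ENNReal.toReal_nonneg (pow_nonneg hs.1 n))]
  have key : ∀ s ∈ Set.Icc (0:ℝ) 1,
      (∑' n, (q n).toReal * s ^ n) * (∑' n, (r n).toReal * s ^ n) = ∑' j, W j * s ^ j := by
    intro s hs
    rw [tsum_mul_tsum_eq_tsum_sum_antidiagonal_of_summable_norm (hnorm s hs q) (hnorm s hs r)]
    refine tsum_congr fun j => ?_
    rw [hW]
    simp only [Finset.sum_mul]
    refine Finset.sum_congr rfl fun x hx => ?_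
    have hx' := Finset.HasAntidiagonal.mem_antidiagonal.mp hx
    rw [← hx', pow_add]; ring
  have hWsum : Summable W := by
    have h := summable_norm_sum_mul_antidiagonal_of_summable_norm
      (hnorm 1 (by norm_num) q) (hnorm 1 (by norm_num) r)
    refine h.of_norm.congr fun j => ?_
    simp [hW]
  have htot : ∑' j, W j = 1 := by
    have h1 := key 1 (by norm_num)
    simp only [one_pow, mul_one] at h1
    rw [← h1, pmf_tsum_toReal q, pmf_tsum_toReal r, one_mul]
  have hmass : HasSum (fun j => ENNReal.ofReal (W j)) 1 := by
    rw [ENNReal.summable.hasSum_iff, ← ENNReal.ofReal_tsum_of_nonneg hWnn hWsum, htot,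
      ENNReal.ofReal_one]
  let m : PMF ℕ := ⟨fun j => ENNReal.ofReal (W j), hmass⟩
  refine ⟨m, fun s hs => ?_⟩
  have happ : ∀ j, (m j).toReal = W j := fun j => ENNReal.toReal_ofReal (hWnn j)
  simp only [happ]
  show f s * g s = _
  rw [hq s hs, hr s hs, key s hs]

lemma isPGF_thin {g : ℝ → ℝ} (hg : IsPGF g) {c : ℝ} (hc : c ∈ Set.Icc (0:ℝ) 1) :
    IsPGF (fun s => g (1 - c + c * s)) := by
  obtain ⟨r, hr⟩ := hg
  set β : ℕ → ℕ → ℝ≥0∞ :=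
    fun n j => ENNReal.ofReal ((n.choose j : ℝ) * c ^ j * (1 - c) ^ (n - j)) with hβ
  have hβA : ∀ (n : ℕ), ∀ s ∈ Set.Icc (0:ℝ) 1,
      ∑' j : ℕ, β n j * (ENNReal.ofReal s) ^ j = ENNReal.ofReal ((1 - c + c * s) ^ n) := by
    intro n s hs
    have hzero : ∀ j ∉ Finset.range (n + 1), β n j * (ENNReal.ofReal s) ^ j = 0 := by
      intro j hj
      have hj' : n < j := by by_contra h; exact hj (Finset.mem_range.mpr (by omega))
      have : n.choose j = 0 := Nat.choose_eq_zero_of_lt hj'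
      simp [hβ, this]
    rw [tsum_eq_sum hzero]
    have hterm : ∀ j ∈ Finset.range (n + 1), β n j * (ENNReal.ofReal s) ^ j =
        ENNReal.ofReal ((n.choose j : ℝ) * c ^ j * (1 - c) ^ (n - j) * s ^ j) := by
      intro j _
      rw [hβ, ← ENNReal.ofReal_pow hs.1, ← ENNReal.ofReal_mul]
      exact mul_nonneg (mul_nonneg (Nat.cast_nonneg _) (pow_nonneg hc.1 _))
        (pow_nonneg (by linarith [hc.2]) _)
    rw [Finset.sum_congr rfl hterm, ← ENNReal.ofReal_sum_of_nonneg]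
    · congr 1
      have h1 : (1 : ℝ) - c + c * s = c * s + (1 - c) := by ring
      rw [h1, add_pow]
      refine Finset.sum_congr rfl fun j hj => ?_
      rw [mul_pow]; ring
    · intro j _
      exact mul_nonneg (mul_nonneg (mul_nonneg (Nat.cast_nonneg _) (pow_nonneg hc.1 _))
        (pow_nonneg (by linarith [hc.2]) _)) (pow_nonneg hs.1 _)
  have hβ1 : ∀ n : ℕ, ∑' j : ℕ, β n j = 1 := by
    intro n
    have := hβA n 1 (by norm_num)
    simpa using this
  set m : ℕ → ℝ≥0∞ := fun j => ∑' n : ℕ, r n * β n j with hm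
  have hmass : ∑' j, m j = 1 := by
    rw [hm]
    rw [ENNReal.tsum_comm]
    calc ∑' n : ℕ, ∑' j : ℕ, r n * β n j = ∑' n : ℕ, r n * ∑' j : ℕ, β n j := by
          refine tsum_congr fun n => ?_
          rw [ENNReal.tsum_mul_left]
      _ = 1 := by simp only [hβ1, mul_one, PMF.tsum_coe]
  have hmne : ∀ j, m j ≠ ∞ := by
    intro j
    refine ne_of_lt (lt_of_le_of_lt ?_ (by norm_num : (1:ℝ≥0∞) < ∞))
    rw [← hmass]
    exact ENNReal.le_tsum j
  refine ⟨⟨m, ENNReal.summable.hasSum_iff.2 hmass⟩, fun s hs => ?_⟩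
  set t : ℝ := 1 - c + c * s with htdef
  have ht : t ∈ Set.Icc (0:ℝ) 1 := by
    constructor
    · nlinarith [hc.1, hc.2, hs.1, hs.2, mul_nonneg hc.1 hs.1]
    · nlinarith [hc.1, hc.2, hs.1, hs.2, mul_le_of_le_one_right hc.1 hs.2]
  have E : ∑' j, m j * (ENNReal.ofReal s) ^ j = ∑' n, r n * ENNReal.ofReal (t ^ n) := by
    calc ∑' j, m j * (ENNReal.ofReal s) ^ j
        = ∑' j, ∑' n, r n * β n j * (ENNReal.ofReal s) ^ j := by
          refine tsum_congr fun j => ?_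
          rw [hm, ENNReal.tsum_mul_right]
      _ = ∑' n, ∑' j, r n * β n j * (ENNReal.ofReal s) ^ j := ENNReal.tsum_comm
      _ = ∑' n, r n * ENNReal.ofReal (t ^ n) := by
          refine tsum_congr fun n => ?_
          rw [← hβA n s hs, ← ENNReal.tsum_mul_left]
          exact tsum_congr fun j => by ring
  have hL : ((∑' j, m j * (ENNReal.ofReal s) ^ j)).toReal = ∑' j, (m j).toReal * s ^ j := by
    rw [ENNReal.tsum_toReal_eq]
    · refine tsum_congr fun j => ?_
      rw [ENNReal.toReal_mul, ← ENNReal.ofReal_pow hs.1, ENNReal.toReal_ofReal (pow_nonneg hs.1 j)]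
    · intro j
      exact ENNReal.mul_ne_top (hmne j) (ENNReal.pow_ne_top ENNReal.ofReal_ne_top)
  have hR : ((∑' n, r n * ENNReal.ofReal (t ^ n))).toReal = ∑' n, (r n).toReal * t ^ n := by
    rw [ENNReal.tsum_toReal_eq]
    · refine tsum_congr fun n => ?_
      rw [ENNReal.toReal_mul, ENNReal.toReal_ofReal (pow_nonneg ht.1 n)]
    · intro n
      exact ENNReal.mul_ne_top (r.apply_ne_top n) ENNReal.ofReal_ne_top
  show g t = _
  rw [hr t ht, ← hR, ← E, hL]
  rfl

lemma key_alg2 {k : ℕ} (hk : 0 < k) {p a q : ℝ} (hp : 0 < p) (hp1 : p < 1) (ha : 0 < a)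
    (heq : a = q * (p + (1 - p) * a ^ k) ^ ((k:ℝ)⁻¹)) :
    a = q / ((1 / p) - ((1 / p) - 1) * q ^ k) ^ ((k:ℝ)⁻¹) := by
  set D : ℝ := p + (1 - p) * a ^ k with hD
  have hD0 : 0 < D := by nlinarith [pow_pos ha k]
  set B : ℝ := D ^ ((k:ℝ)⁻¹) with hB
  have hB0 : 0 < B := Real.rpow_pos_of_pos hD0 _
  have hBk : B ^ k = D := Real.rpow_inv_natCast_pow hD0.le hk.ne'
  have hq : q = a / B := by rw [heq, mul_div_assoc, div_self hB0.ne', mul_one]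
  have hqk : q ^ k = a ^ k / D := by rw [hq, div_pow, hBk]
  have hpne : p ≠ 0 := hp.ne'
  have hDne : D ≠ 0 := hD0.ne'
  have h2 : ((1 / p) - 1) * (a ^ k / D) * D = ((1 / p) - 1) * a ^ k := by
    rw [mul_assoc, div_mul_cancel₀ _ hDne]
  have hE : (1 / p) - ((1 / p) - 1) * q ^ k = 1 / D := by
    rw [hqk, eq_div_iff hDne, sub_mul, h2, hD]
    field_simp
    ring
  rw [hE, one_div, Real.inv_rpow hD0.le, division_def, inv_inv, ← hB]
  exact heq

lemma key_alg {k : ℕ} (hk : 0 < k) {p a b : ℝ} (hp : 0 < p) (hp1 : p < 1) (ha : 0 < a)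
    (hb0 : 0 ≤ b) (hb1 : b ≤ 1)
    (heq : a = b / ((1 / p) - ((1 / p) - 1) * b ^ k) ^ ((k:ℝ)⁻¹)) :
    b = a / (p + (1 - p) * a ^ k) ^ ((k:ℝ)⁻¹) := by
  set E : ℝ := (1 / p) - ((1 / p) - 1) * b ^ k with hE
  have hbk : b ^ k ≤ 1 := pow_le_one₀ hb0 hb1
  have hbk0 : 0 ≤ b ^ k := pow_nonneg hb0 k
  have h1p : 1 ≤ 1 / p := by rw [le_div_iff₀ hp]; linarith
  have hE1 : 1 ≤ E := by rw [hE]; nlinarith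
  have hE0 : 0 < E := lt_of_lt_of_le one_pos hE1
  set F : ℝ := E ^ ((k:ℝ)⁻¹) with hF
  have hF0 : 0 < F := Real.rpow_pos_of_pos hE0 _
  have hFk : F ^ k = E := Real.rpow_inv_natCast_pow hE0.le hk.ne'
  have hak : a ^ k = b ^ k / E := by rw [heq, div_pow, hFk]
  have hpne : p ≠ 0 := hp.ne'
  have hEne : E ≠ 0 := hE0.ne'
  have hpE : p * E = 1 - (1 - p) * b ^ k := by
    rw [hE]; field_simp
  have h2 : (1 - p) * (b ^ k / E) * E = (1 - p) * b ^ k := by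
    rw [mul_assoc, div_mul_cancel₀ _ hEne]
  have hDE : p + (1 - p) * a ^ k = 1 / E := by
    rw [hak, eq_div_iff hEne, add_mul, h2, hpE]
    ring
  rw [hDE, one_div, Real.inv_rpow hE0.le, division_def, inv_inv, ← hF, heq,
    div_mul_cancel₀ _ hF0.ne']

theorem dhrsd_iff_dsd_and_dhid (k : ℕ) (hk : 0 < k) (P : ℝ → ℝ) (hP : IsPGF P)
    (hpos : ∀ s ∈ Icc (0:ℝ) 1, 0 < P s) :
    (IsDHRSD k P ↔ IsDSD P ∧ IsDHID k P) ∧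
    (IsDHRSD k P →
      ∀ c ∈ Ioc (0:ℝ) 1, ∀ p ∈ Ico (0:ℝ) 1, ∀ s ∈ Icc (0:ℝ) 1,
        P s = (P s / P (1 - c + c * s)) *
          (P (1 - c + c * s) /
            (p + (1 - p) * (P (1 - c + c * s)) ^ k) ^ ((k : ℝ)⁻¹)) *
          (p + (1 - p) * (P (1 - c + c * s)) ^ k) ^ ((k : ℝ)⁻¹)) := by
  have hkne : k ≠ 0 := hk.ne'
  have hmem : ∀ c ∈ Ioc (0:ℝ) 1, ∀ s ∈ Icc (0:ℝ) 1, (1 - c + c * s) ∈ Icc (0:ℝ) 1 := by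
    intro c hc s hs
    obtain ⟨hc1, hc2⟩ := hc
    obtain ⟨hs1, hs2⟩ := hs
    constructor
    · nlinarith [mul_nonneg hc1.le hs1]
    · nlinarith [mul_le_of_le_one_right hc1.le hs2]
  have hBpos : ∀ p ∈ Ico (0:ℝ) 1, ∀ x : ℝ, 0 < x → 0 < p + (1 - p) * x ^ k := by
    intro p hp x hx
    have := pow_pos hx k
    nlinarith [hp.1, hp.2]
  constructor
  · constructor
    · intro hD
      constructor
      · -- DSD
        intro c hc
        obtain ⟨Q, hQ, hQeq⟩ := hD c ⟨hc.1, hc.2.le⟩ 0 ⟨le_refl 0, one_pos⟩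
        refine isPGF_congr hQ fun s hs => ?_
        have ht := hmem c ⟨hc.1, hc.2.le⟩ s hs
        have hA := hpos _ ht
        have heq := hQeq s hs
        simp only [zero_add, sub_zero, one_mul] at heq
        rw [Real.pow_rpow_inv_natCast hA.le hkne] at heq
        show P s / P (1 - c + c * s) = Q s
        rw [heq, mul_div_cancel_right₀ _ hA.ne']
      · -- DHID
        intro p hp
        obtain ⟨Q, hQ, hQeq⟩ := hD 1 ⟨one_pos, le_refl 1⟩ p ⟨hp.1.le, hp.2⟩
        refine ⟨Q, hQ, fun s hs => ?_⟩
        have heq := hQeq s hs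
        rw [show (1:ℝ) - 1 + 1 * s = s by ring] at heq
        exact key_alg2 hk hp.1 hp.2 (hpos s hs) heq
    · -- reverse direction
      rintro ⟨hSD, hID⟩ c hc p hp
      have hPpfun : ∃ Pp : ℝ → ℝ, IsPGF Pp ∧ ∀ t ∈ Icc (0:ℝ) 1,
          Pp t = P t / (p + (1 - p) * P t ^ k) ^ ((k:ℝ)⁻¹) := by
        rcases eq_or_lt_of_le hp.1 with h0 | h0
        · refine ⟨fun _ => 1, isPGF_one, fun t ht => ?_⟩
          rw [← h0, zero_add, sub_zero, one_mul,
            Real.pow_rpow_inv_natCast (hpos t ht).le hkne, div_self (hpos t ht).ne']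
        · obtain ⟨Pp, hPp, hPpeq⟩ := hID p ⟨h0, hp.2⟩
          refine ⟨Pp, hPp, fun t ht => ?_⟩
          have hb := hPp.mem_Icc ht
          exact key_alg hk h0 hp.2 (hpos t ht) hb.1 hb.2 (hPpeq t ht)
      obtain ⟨Pp, hPpPGF, hPpval⟩ := hPpfun
      have hPcPGF : IsPGF (fun s => P s / P (1 - c + c * s)) := by
        rcases lt_or_eq_of_le hc.2 with h1 | h1
        · exact hSD c ⟨hc.1, h1⟩
        · refine isPGF_congr isPGF_one fun s hs => ?_
          rw [show (1:ℝ) - c + c * s = s by rw [h1]; ring, div_self (hpos s hs).ne']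
      refine ⟨fun s => (P s / P (1 - c + c * s)) * Pp (1 - c + c * s),
        isPGF_mul hPcPGF (isPGF_thin hPpPGF ⟨hc.1.le, hc.2⟩), fun s hs => ?_⟩
      have ht := hmem c hc s hs
      have hA := hpos _ ht
      have hB := hBpos p hp _ hA
      have hBr : (0:ℝ) < (p + (1 - p) * P (1 - c + c * s) ^ k) ^ ((k:ℝ)⁻¹) :=
        Real.rpow_pos_of_pos hB _
      show P s = P s / P (1 - c + c * s) * Pp (1 - c + c * s) *
        (p + (1 - p) * P (1 - c + c * s) ^ k) ^ ((k:ℝ)⁻¹)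
      rw [hPpval _ ht]
      field_simp
  · -- choice of the component
    intro _ c hc p hp s hs
    have ht := hmem c hc s hs
    have hA := hpos _ ht
    have hB := hBpos p hp _ hA
    have hBr : (0:ℝ) < (p + (1 - p) * P (1 - c + c * s) ^ k) ^ ((k:ℝ)⁻¹) :=
      Real.rpow_pos_of_pos hB _
    field_simp
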